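/- The map $m: \widehat{\mathbb{Z}G}_\xi \otimes \widehat{\mathbb{Z}G}_\xi \to \widehat{\mathbb{R}\Gamma}_\xi$ given by $m(\lambda_1 \otimes \lambda_2)(\gamma) = \sum_{\{h_1h_2\}=\gamma} \frac{\xi(h_1)}{\xi(\gamma)}\lambda_1(h_1)\lambda_2(h_2)$ for $\xi(\gamma) < 0$ (and $0$ for $\xi(\gamma) \geq 0$) vanishes on Hochschild 1-boundaries: $m(\lambda_2 \otimes \lambda_3\lambda_1 - \lambda_1\lambda_2 \otimes \lambda_3 + \lambda_1 \otimes \lambda_2\lambda_3) = 0$ for all $\lambda_1,\lambda_2,\lambda_3 \in \widehat{\mathbb{Z}G}_\xi$. Hence $m$ induces a homomorphism $\mu: HH_1(\widehat{\mathbb{Z}G}_\xi) \to \widehat{\mathbb{R}\Gamma}_\xi$. -/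
import Mathlib


noncomputable section
open scoped Classical
open scoped Pointwise

/-- Novikov finiteness condition (coefficients in `ℤ`). -/
def NovCond {G : Type*} [Group G] (ξ : G → ℝ) (l : G → ℤ) : Prop :=
  ∀ r : ℝ, {g : G | l g ≠ 0 ∧ r ≤ ξ g}.Finite

/-- Convolution product on the Novikov ring `ẐG_ξ`. -/
def conv {G : Type*} [Group G] (l₁ l₂ : G → ℤ) : G → ℤ :=
  fun g => ∑ᶠ h : G, l₁ h * l₂ (h⁻¹ * g)

/-- The weighted multiplication-augmentation
`m(λ₁ ⊗ λ₂)(γ) = ∑_{ {h₁h₂} = γ } (ξ(h₁)/ξ(γ)) λ₁(h₁) λ₂(h₂)` for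
`ξ(γ) < 0`, and `0` for `ξ(γ) ≥ 0`.  Here `ξΓ` is the map on conjugacy
classes induced by `ξ`. -/
def mMap {G : Type*} [Group G] (ξ : G → ℝ) (ξΓ : ConjClasses G → ℝ)
    (l₁ l₂ : G → ℤ) : ConjClasses G → ℝ :=
  fun γ =>
    if ξΓ γ < 0 then
      ∑ᶠ p : G × G, if ConjClasses.mk (p.1 * p.2) = γ then
        (ξ p.1 / ξΓ γ) * ((l₁ p.1 * l₂ p.2 : ℤ) : ℝ) else 0
    else 0

private lemma mk_mul_comm' {G : Type*} [Group G] (a b : G) :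
    ConjClasses.mk (a * b) = ConjClasses.mk (b * a) := by
  rw [ConjClasses.mk_eq_mk_iff_isConj]
  exact isConj_iff.2 ⟨b, by group⟩

private lemma exists_bound {G : Type*} [Group G] (ξ : G → ℝ) (l : G → ℤ)
    (h : NovCond ξ l) : ∃ M : ℝ, ∀ g, l g ≠ 0 → ξ g ≤ M := by
  classical
  refine ⟨(insert (0:ℝ) ((h 0).toFinset.image ξ)).max' (Finset.insert_nonempty _ _), ?_⟩
  intro g hg
  by_cases h0 : (0:ℝ) ≤ ξ g
  · exact Finset.le_max' _ _
      (Finset.mem_insert_of_mem (Finset.mem_image_of_mem ξ ((h 0).mem_toFinset.mpr ⟨hg, h0⟩)))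
  · exact le_trans (le_of_lt (lt_of_not_ge h0))
      (Finset.le_max' _ 0 (Finset.mem_insert_self _ _))

private lemma sum_of_support {α M : Type*} [AddCommMonoid M] {S : α → M} {V W : Finset α}
    (hV : ∀ x, S x ≠ 0 → x ∈ V) (hW : ∀ x, S x ≠ 0 → x ∈ W) :
    ∑ x ∈ V, S x = ∑ x ∈ W, S x := by
  classical
  have h1 : ∑ x ∈ V, S x = ∑ x ∈ V ∪ W, S x :=
    Finset.sum_subset Finset.subset_union_left (fun x _ hx => by
      by_contra h; exact hx (hV x h))
  have h2 : ∑ x ∈ W, S x = ∑ x ∈ V ∪ W, S x :=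
    Finset.sum_subset Finset.subset_union_right (fun x _ hx => by
      by_contra h; exact hx (hW x h))
  rw [h1, h2]

/-- Expansion of `m(f ⊗ g∗k)` as a triple sum. -/
private lemma rconv_eq {G : Type*} [Group G] (ξ : G → ℝ) (γ : ConjClasses G) (c : ℝ)
    (f g k : G → ℤ) (A B C : Finset G)
    (hABC : ∀ a b d : G, f a ≠ 0 → g b ≠ 0 → k d ≠ 0 →
      ConjClasses.mk (a * b * d) = γ → a ∈ A ∧ b ∈ B ∧ d ∈ C) :
    (∑ᶠ p : G × G, if ConjClasses.mk (p.1 * p.2) = γ then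
        (ξ p.1 / c) * ((f p.1 * conv g k p.2 : ℤ) : ℝ) else 0) =
      ∑ t ∈ A ×ˢ B ×ˢ C, if ConjClasses.mk (t.1 * t.2.1 * t.2.2) = γ then
        (ξ t.1 / c) * ((f t.1 * g t.2.1 * k t.2.2 : ℤ) : ℝ) else 0 := by
  classical
  set S : G × G × G → ℝ := fun t => if ConjClasses.mk (t.1 * t.2.1 * t.2.2) = γ then
      (ξ t.1 / c) * ((f t.1 * g t.2.1 * k t.2.2 : ℤ) : ℝ) else 0 with hS
  have hS_mem : ∀ t : G × G × G, S t ≠ 0 → t.1 ∈ A ∧ t.2.1 ∈ B ∧ t.2.2 ∈ C := by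
    intro t ht
    have hcond : ConjClasses.mk (t.1 * t.2.1 * t.2.2) = γ := by
      by_contra h; exact ht (if_neg h)
    have hne : ((f t.1 * g t.2.1 * k t.2.2 : ℤ) : ℝ) ≠ 0 := by
      intro h
      exact ht (by rw [hS]; simp only [if_pos hcond, h, mul_zero])
    have hmul : (f t.1 * g t.2.1 * k t.2.2 : ℤ) ≠ 0 := fun h => hne (by rw [h]; simp)
    exact hABC _ _ _ (left_ne_zero_of_mul (left_ne_zero_of_mul hmul))
      (right_ne_zero_of_mul (left_ne_zero_of_mul hmul)) (right_ne_zero_of_mul hmul) hcond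
  have hsupp : (Function.support fun p : G × G =>
      if ConjClasses.mk (p.1 * p.2) = γ then
        (ξ p.1 / c) * ((f p.1 * conv g k p.2 : ℤ) : ℝ) else 0) ⊆ ↑(A ×ˢ (B * C)) := by
    intro p hp
    have hcond : ConjClasses.mk (p.1 * p.2) = γ := by
      by_contra h; exact hp (if_neg h)
    have hne : (ξ p.1 / c) * ((f p.1 * conv g k p.2 : ℤ) : ℝ) ≠ 0 := by
      simpa [Function.mem_support, hcond] using hp
    have hmul : (f p.1 * conv g k p.2 : ℤ) ≠ 0 := by
      intro h; apply hne; rw [h]; simp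
    have hf1 : f p.1 ≠ 0 := left_ne_zero_of_mul hmul
    have hconv : conv g k p.2 ≠ 0 := right_ne_zero_of_mul hmul
    obtain ⟨h, hh⟩ : ∃ h : G, g h * k (h⁻¹ * p.2) ≠ 0 := by
      by_contra hall; push_neg at hall
      exact hconv (finsum_eq_zero_of_forall_eq_zero hall)
    have hcond' : ConjClasses.mk (p.1 * h * (h⁻¹ * p.2)) = γ := by
      rw [show p.1 * h * (h⁻¹ * p.2) = p.1 * p.2 by group]; exact hcond
    obtain ⟨hA', hB', hC'⟩ := hABC _ _ _ hf1 (left_ne_zero_of_mul hh)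
      (right_ne_zero_of_mul hh) hcond'
    refine Finset.mem_coe.mpr (Finset.mem_product.mpr ⟨hA', ?_⟩)
    rw [show p.2 = h * (h⁻¹ * p.2) by group]
    exact Finset.mul_mem_mul hB' hC'
  rw [finsum_eq_sum_of_support_subset _ hsupp]
  have hterm : ∀ p ∈ A ×ˢ (B * C),
      (if ConjClasses.mk (p.1 * p.2) = γ then
        (ξ p.1 / c) * ((f p.1 * conv g k p.2 : ℤ) : ℝ) else 0) =
      ∑ h ∈ B, if ConjClasses.mk (p.1 * p.2) = γ then
        (ξ p.1 / c) * ((f p.1 * (g h * k (h⁻¹ * p.2)) : ℤ) : ℝ) else 0 := by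
    intro p _
    by_cases hcond : ConjClasses.mk (p.1 * p.2) = γ
    · by_cases hf1 : f p.1 = 0
      · simp [hcond, hf1]
      · have hconv : conv g k p.2 = ∑ h ∈ B, g h * k (h⁻¹ * p.2) := by
          apply finsum_eq_sum_of_support_subset
          intro h hh
          have hh' : g h * k (h⁻¹ * p.2) ≠ 0 := hh
          have hcond' : ConjClasses.mk (p.1 * h * (h⁻¹ * p.2)) = γ := by
            rw [show p.1 * h * (h⁻¹ * p.2) = p.1 * p.2 by group]; exact hcond
          exact Finset.mem_coe.mpr
            (hABC _ _ _ hf1 (left_ne_zero_of_mul hh') (right_ne_zero_of_mul hh') hcond').2.1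
        rw [if_pos hcond]
        conv_lhs => rw [hconv]
        simp only [if_pos hcond]
        push_cast
        rw [Finset.mul_sum, Finset.mul_sum]
    · simp [hcond]
  rw [Finset.sum_congr rfl hterm, ← Finset.sum_product']
  set e : (G × G) × G ≃ G × G × G :=
    { toFun := fun x => (x.1.1, x.2, x.2⁻¹ * x.1.2)
      invFun := fun t => ((t.1, t.2.1 * t.2.2), t.2.1)
      left_inv := fun x => by
        obtain ⟨⟨a, b⟩, h⟩ := x
        simp [mul_inv_cancel_left]
      right_inv := fun t => by
        obtain ⟨a, b, d⟩ := t
        simp [inv_mul_cancel_left] } with he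
  have key : ∀ x : (G × G) × G,
      (if ConjClasses.mk (x.1.1 * x.1.2) = γ then
        (ξ x.1.1 / c) * ((f x.1.1 * (g x.2 * k (x.2⁻¹ * x.1.2)) : ℤ) : ℝ) else 0)
      = S (e x) := by
    intro x
    rw [hS]
    simp only [he, Equiv.coe_fn_mk]
    rw [show x.1.1 * x.2 * (x.2⁻¹ * x.1.2) = x.1.1 * x.1.2 by group]
    by_cases hcond : ConjClasses.mk (x.1.1 * x.1.2) = γ
    · simp only [if_pos hcond]; push_cast; ring
    · simp [hcond]
  calc ∑ x ∈ (A ×ˢ (B * C)) ×ˢ B,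
        (if ConjClasses.mk (x.1.1 * x.1.2) = γ then
          (ξ x.1.1 / c) * ((f x.1.1 * (g x.2 * k (x.2⁻¹ * x.1.2)) : ℤ) : ℝ) else 0)
      = ∑ x ∈ (A ×ˢ (B * C)) ×ˢ B, S (e x) := Finset.sum_congr rfl (fun x _ => key x)
    _ = ∑ t ∈ ((A ×ˢ (B * C)) ×ˢ B).map e.toEmbedding, S t := by rw [Finset.sum_map]; rfl
    _ = ∑ t ∈ A ×ˢ B ×ˢ C, S t := by
        apply sum_of_support
        · intro t ht
          obtain ⟨hA', hB', hC'⟩ := hS_mem t ht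
          rw [Finset.mem_map]
          refine ⟨((t.1, t.2.1 * t.2.2), t.2.1), ?_, e.right_inv t⟩
          exact Finset.mem_product.mpr ⟨Finset.mem_product.mpr
            ⟨hA', Finset.mul_mem_mul hB' hC'⟩, hB'⟩
        · intro t ht
          obtain ⟨hA', hB', hC'⟩ := hS_mem t ht
          exact Finset.mem_product.mpr ⟨hA', Finset.mem_product.mpr ⟨hB', hC'⟩⟩

/-- Expansion of `m(f∗g ⊗ k)` as a triple sum. -/
private lemma lconv_eq {G : Type*} [Group G] (ξ : G → ℝ)
    (hξ : ∀ a b : G, ξ (a * b) = ξ a + ξ b)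
    (γ : ConjClasses G) (c : ℝ)
    (f g k : G → ℤ) (A B C : Finset G)
    (hABC : ∀ a b d : G, f a ≠ 0 → g b ≠ 0 → k d ≠ 0 →
      ConjClasses.mk (a * b * d) = γ → a ∈ A ∧ b ∈ B ∧ d ∈ C) :
    (∑ᶠ p : G × G, if ConjClasses.mk (p.1 * p.2) = γ then
        (ξ p.1 / c) * ((conv f g p.1 * k p.2 : ℤ) : ℝ) else 0) =
      ∑ t ∈ A ×ˢ B ×ˢ C, if ConjClasses.mk (t.1 * t.2.1 * t.2.2) = γ then
        ((ξ t.1 + ξ t.2.1) / c) * ((f t.1 * g t.2.1 * k t.2.2 : ℤ) : ℝ) else 0 := by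
  classical
  set S : G × G × G → ℝ := fun t => if ConjClasses.mk (t.1 * t.2.1 * t.2.2) = γ then
      ((ξ t.1 + ξ t.2.1) / c) * ((f t.1 * g t.2.1 * k t.2.2 : ℤ) : ℝ) else 0 with hS
  have hS_mem : ∀ t : G × G × G, S t ≠ 0 → t.1 ∈ A ∧ t.2.1 ∈ B ∧ t.2.2 ∈ C := by
    intro t ht
    have hcond : ConjClasses.mk (t.1 * t.2.1 * t.2.2) = γ := by
      by_contra h; exact ht (if_neg h)
    have hne : ((f t.1 * g t.2.1 * k t.2.2 : ℤ) : ℝ) ≠ 0 := by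
      intro h
      exact ht (by rw [hS]; simp only [if_pos hcond, h, mul_zero])
    have hmul : (f t.1 * g t.2.1 * k t.2.2 : ℤ) ≠ 0 := fun h => hne (by rw [h]; simp)
    exact hABC _ _ _ (left_ne_zero_of_mul (left_ne_zero_of_mul hmul))
      (right_ne_zero_of_mul (left_ne_zero_of_mul hmul)) (right_ne_zero_of_mul hmul) hcond
  have hsupp : (Function.support fun p : G × G =>
      if ConjClasses.mk (p.1 * p.2) = γ then
        (ξ p.1 / c) * ((conv f g p.1 * k p.2 : ℤ) : ℝ) else 0) ⊆ ↑((A * B) ×ˢ C) := by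
    intro p hp
    have hcond : ConjClasses.mk (p.1 * p.2) = γ := by
      by_contra h; exact hp (if_neg h)
    have hne : (ξ p.1 / c) * ((conv f g p.1 * k p.2 : ℤ) : ℝ) ≠ 0 := by
      simpa [Function.mem_support, hcond] using hp
    have hmul : (conv f g p.1 * k p.2 : ℤ) ≠ 0 := by
      intro h; apply hne; rw [h]; simp
    have hk2 : k p.2 ≠ 0 := right_ne_zero_of_mul hmul
    have hconv : conv f g p.1 ≠ 0 := left_ne_zero_of_mul hmul
    obtain ⟨h, hh⟩ : ∃ h : G, f h * g (h⁻¹ * p.1) ≠ 0 := by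
      by_contra hall; push_neg at hall
      exact hconv (finsum_eq_zero_of_forall_eq_zero hall)
    have hcond' : ConjClasses.mk (h * (h⁻¹ * p.1) * p.2) = γ := by
      rw [show h * (h⁻¹ * p.1) * p.2 = p.1 * p.2 by group]; exact hcond
    obtain ⟨hA', hB', hC'⟩ := hABC _ _ _ (left_ne_zero_of_mul hh)
      (right_ne_zero_of_mul hh) hk2 hcond'
    refine Finset.mem_coe.mpr (Finset.mem_product.mpr ⟨?_, hC'⟩)
    rw [show p.1 = h * (h⁻¹ * p.1) by group]
    exact Finset.mul_mem_mul hA' hB'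
  rw [finsum_eq_sum_of_support_subset _ hsupp]
  have hterm : ∀ p ∈ (A * B) ×ˢ C,
      (if ConjClasses.mk (p.1 * p.2) = γ then
        (ξ p.1 / c) * ((conv f g p.1 * k p.2 : ℤ) : ℝ) else 0) =
      ∑ h ∈ A, if ConjClasses.mk (p.1 * p.2) = γ then
        (ξ p.1 / c) * ((f h * g (h⁻¹ * p.1) * k p.2 : ℤ) : ℝ) else 0 := by
    intro p _
    by_cases hcond : ConjClasses.mk (p.1 * p.2) = γ
    · by_cases hk2 : k p.2 = 0
      · simp [hcond, hk2]
      · have hconv : conv f g p.1 = ∑ h ∈ A, f h * g (h⁻¹ * p.1) := by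
          apply finsum_eq_sum_of_support_subset
          intro h hh
          have hh' : f h * g (h⁻¹ * p.1) ≠ 0 := hh
          have hcond' : ConjClasses.mk (h * (h⁻¹ * p.1) * p.2) = γ := by
            rw [show h * (h⁻¹ * p.1) * p.2 = p.1 * p.2 by group]; exact hcond
          exact Finset.mem_coe.mpr
            (hABC _ _ _ (left_ne_zero_of_mul hh') (right_ne_zero_of_mul hh') hk2 hcond').1
        rw [if_pos hcond]
        conv_lhs => rw [hconv]
        simp only [if_pos hcond]
        push_cast
        rw [Finset.sum_mul, Finset.mul_sum]
    · simp [hcond]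
  rw [Finset.sum_congr rfl hterm, ← Finset.sum_product']
  set e : (G × G) × G ≃ G × G × G :=
    { toFun := fun x => (x.2, x.2⁻¹ * x.1.1, x.1.2)
      invFun := fun t => ((t.1 * t.2.1, t.2.2), t.1)
      left_inv := fun x => by
        obtain ⟨⟨a, b⟩, h⟩ := x
        simp [mul_inv_cancel_left]
      right_inv := fun t => by
        obtain ⟨a, b, d⟩ := t
        simp [inv_mul_cancel_left] } with he
  have key : ∀ x : (G × G) × G,
      (if ConjClasses.mk (x.1.1 * x.1.2) = γ then
        (ξ x.1.1 / c) * ((f x.2 * g (x.2⁻¹ * x.1.1) * k x.1.2 : ℤ) : ℝ) else 0)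
      = S (e x) := by
    intro x
    rw [hS]
    simp only [he, Equiv.coe_fn_mk]
    rw [show x.2 * (x.2⁻¹ * x.1.1) * x.1.2 = x.1.1 * x.1.2 by group]
    have hw : ξ x.2 + ξ (x.2⁻¹ * x.1.1) = ξ x.1.1 := by
      rw [← hξ]
      rw [show x.2 * (x.2⁻¹ * x.1.1) = x.1.1 by group]
    rw [hw]
  calc ∑ x ∈ ((A * B) ×ˢ C) ×ˢ A,
        (if ConjClasses.mk (x.1.1 * x.1.2) = γ then
          (ξ x.1.1 / c) * ((f x.2 * g (x.2⁻¹ * x.1.1) * k x.1.2 : ℤ) : ℝ) else 0)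
      = ∑ x ∈ ((A * B) ×ˢ C) ×ˢ A, S (e x) := Finset.sum_congr rfl (fun x _ => key x)
    _ = ∑ t ∈ (((A * B) ×ˢ C) ×ˢ A).map e.toEmbedding, S t := by rw [Finset.sum_map]; rfl
    _ = ∑ t ∈ A ×ˢ B ×ˢ C, S t := by
        apply sum_of_support
        · intro t ht
          obtain ⟨hA', hB', hC'⟩ := hS_mem t ht
          rw [Finset.mem_map]
          refine ⟨((t.1 * t.2.1, t.2.2), t.1), ?_, e.right_inv t⟩
          exact Finset.mem_product.mpr ⟨Finset.mem_product.mpr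
            ⟨Finset.mul_mem_mul hA' hB', hC'⟩, hA'⟩
        · intro t ht
          obtain ⟨hA', hB', hC'⟩ := hS_mem t ht
          exact Finset.mem_product.mpr ⟨hA', Finset.mem_product.mpr ⟨hB', hC'⟩⟩

/-- The map `m` vanishes on Hochschild 1-boundaries:
`m(λ₂ ⊗ λ₃λ₁ - λ₁λ₂ ⊗ λ₃ + λ₁ ⊗ λ₂λ₃) = 0`.  Hence `m` induces a
homomorphism `μ : HH₁(ẐG_ξ) → R̂Γ_ξ`. -/
theorem mMap_vanishes_on_boundaries
    {G : Type*} [Group G] (ξ : G → ℝ)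
    (hξ : ∀ a b : G, ξ (a * b) = ξ a + ξ b)
    (ξΓ : ConjClasses G → ℝ) (hξΓ : ∀ g : G, ξΓ (ConjClasses.mk g) = ξ g)
    (l₁ l₂ l₃ : G → ℤ)
    (h₁ : NovCond ξ l₁) (h₂ : NovCond ξ l₂) (h₃ : NovCond ξ l₃) :
    ∀ γ : ConjClasses G,
      mMap ξ ξΓ l₂ (conv l₃ l₁) γ - mMap ξ ξΓ (conv l₁ l₂) l₃ γ +
        mMap ξ ξΓ l₁ (conv l₂ l₃) γ = 0 := by
  intro γ
  by_cases hc : ξΓ γ < 0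
  · obtain ⟨M₁, hM₁⟩ := exists_bound ξ l₁ h₁
    obtain ⟨M₂, hM₂⟩ := exists_bound ξ l₂ h₂
    obtain ⟨M₃, hM₃⟩ := exists_bound ξ l₃ h₃
    set c := ξΓ γ with hcdef
    have hγg : ∀ g : G, ConjClasses.mk g = γ → ξ g = c := by
      intro g hg
      rw [← hξΓ g, hg]
    set A := (h₁ (c - M₂ - M₃)).toFinset with hA
    set B := (h₂ (c - M₁ - M₃)).toFinset with hB
    set C := (h₃ (c - M₁ - M₂)).toFinset with hC
    have hmemA : ∀ a, l₁ a ≠ 0 → c - M₂ - M₃ ≤ ξ a → a ∈ A :=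
      fun a u v => (h₁ _).mem_toFinset.mpr ⟨u, v⟩
    have hmemB : ∀ a, l₂ a ≠ 0 → c - M₁ - M₃ ≤ ξ a → a ∈ B :=
      fun a u v => (h₂ _).mem_toFinset.mpr ⟨u, v⟩
    have hmemC : ∀ a, l₃ a ≠ 0 → c - M₁ - M₂ ≤ ξ a → a ∈ C :=
      fun a u v => (h₃ _).mem_toFinset.mpr ⟨u, v⟩
    have hABC₃ : ∀ a b d : G, l₁ a ≠ 0 → l₂ b ≠ 0 → l₃ d ≠ 0 →
        ConjClasses.mk (a * b * d) = γ → a ∈ A ∧ b ∈ B ∧ d ∈ C := by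
      intro a b d ha hb hd hcond
      have hsum : ξ a + ξ b + ξ d = c := by
        have := hγg _ hcond
        rw [hξ, hξ] at this
        linarith
      have hb' := hM₂ b hb
      have hd' := hM₃ d hd
      have ha' := hM₁ a ha
      exact ⟨hmemA a ha (by linarith), hmemB b hb (by linarith), hmemC d hd (by linarith)⟩
    have hABC₁ : ∀ b d a : G, l₂ b ≠ 0 → l₃ d ≠ 0 → l₁ a ≠ 0 →
        ConjClasses.mk (b * d * a) = γ → b ∈ B ∧ d ∈ C ∧ a ∈ A := by
      intro b d a hb hd ha hcond
      have hsum : ξ b + ξ d + ξ a = c := by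
        have := hγg _ hcond
        rw [hξ, hξ] at this
        linarith
      have hb' := hM₂ b hb
      have hd' := hM₃ d hd
      have ha' := hM₁ a ha
      exact ⟨hmemB b hb (by linarith), hmemC d hd (by linarith), hmemA a ha (by linarith)⟩
    simp only [mMap, if_pos hc, ← hcdef]
    rw [rconv_eq ξ γ c l₂ l₃ l₁ B C A hABC₁,
      lconv_eq ξ hξ γ c l₁ l₂ l₃ A B C hABC₃,
      rconv_eq ξ γ c l₁ l₂ l₃ A B C hABC₃]
    have hreindex :
        (∑ u ∈ B ×ˢ C ×ˢ A, if ConjClasses.mk (u.1 * u.2.1 * u.2.2) = γ then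
          (ξ u.1 / c) * ((l₂ u.1 * l₃ u.2.1 * l₁ u.2.2 : ℤ) : ℝ) else 0)
        = ∑ t ∈ A ×ˢ B ×ˢ C, if ConjClasses.mk (t.2.1 * t.2.2 * t.1) = γ then
          (ξ t.2.1 / c) * ((l₂ t.2.1 * l₃ t.2.2 * l₁ t.1 : ℤ) : ℝ) else 0 := by
      classical
      set σ : G × G × G ≃ G × G × G :=
        { toFun := fun u => (u.2.2, u.1, u.2.1)
          invFun := fun t => (t.2.1, t.2.2, t.1)
          left_inv := fun ⟨x, y, z⟩ => rfl
          right_inv := fun ⟨x, y, z⟩ => rfl } with hσ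
      set S : G × G × G → ℝ := fun t => if ConjClasses.mk (t.2.1 * t.2.2 * t.1) = γ then
          (ξ t.2.1 / c) * ((l₂ t.2.1 * l₃ t.2.2 * l₁ t.1 : ℤ) : ℝ) else 0 with hSdef
      have hS_mem : ∀ t : G × G × G, S t ≠ 0 → t.1 ∈ A ∧ t.2.1 ∈ B ∧ t.2.2 ∈ C := by
        intro t ht
        have hcond : ConjClasses.mk (t.2.1 * t.2.2 * t.1) = γ := by
          by_contra h; exact ht (if_neg h)
        have hne : ((l₂ t.2.1 * l₃ t.2.2 * l₁ t.1 : ℤ) : ℝ) ≠ 0 := by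
          intro h
          exact ht (by rw [hSdef]; simp only [if_pos hcond, h, mul_zero])
        have hmul : (l₂ t.2.1 * l₃ t.2.2 * l₁ t.1 : ℤ) ≠ 0 := fun h => hne (by rw [h]; simp)
        obtain ⟨u, v, w⟩ := hABC₁ _ _ _ (left_ne_zero_of_mul (left_ne_zero_of_mul hmul))
          (right_ne_zero_of_mul (left_ne_zero_of_mul hmul)) (right_ne_zero_of_mul hmul) hcond
        exact ⟨w, u, v⟩
      calc ∑ u ∈ B ×ˢ C ×ˢ A, (if ConjClasses.mk (u.1 * u.2.1 * u.2.2) = γ then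
              (ξ u.1 / c) * ((l₂ u.1 * l₃ u.2.1 * l₁ u.2.2 : ℤ) : ℝ) else 0)
          = ∑ u ∈ B ×ˢ C ×ˢ A, S (σ u) := rfl
        _ = ∑ t ∈ (B ×ˢ C ×ˢ A).map σ.toEmbedding, S t := by rw [Finset.sum_map]; rfl
        _ = ∑ t ∈ A ×ˢ B ×ˢ C, S t := by
            apply sum_of_support
            · intro t ht
              obtain ⟨hA', hB', hC'⟩ := hS_mem t ht
              rw [Finset.mem_map]
              refine ⟨(t.2.1, t.2.2, t.1), ?_, ?_⟩
              · exact Finset.mem_product.mpr ⟨hB', Finset.mem_product.mpr ⟨hC', hA'⟩⟩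
              · exact σ.right_inv t
            · intro t ht
              obtain ⟨hA', hB', hC'⟩ := hS_mem t ht
              exact Finset.mem_product.mpr ⟨hA', Finset.mem_product.mpr ⟨hB', hC'⟩⟩
    rw [hreindex, ← Finset.sum_sub_distrib, ← Finset.sum_add_distrib]
    apply Finset.sum_eq_zero
    intro t _
    have hcm : ConjClasses.mk (t.2.1 * t.2.2 * t.1) = ConjClasses.mk (t.1 * t.2.1 * t.2.2) := by
      rw [mk_mul_comm', ← mul_assoc]
    rw [hcm]
    by_cases hcond : ConjClasses.mk (t.1 * t.2.1 * t.2.2) = γ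
    · simp only [if_pos hcond]
      push_cast
      ring
    · simp [hcond]
  · simp [mMap, hc]
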